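/- Gevrey series form a star subalgebra: if f, g ∈ ℂ[[t,q,p]] have convergent formal Borel transforms β(f), β(g) ∈ ℂ{ξ,q,p}, then β(f ⋆ g) ∈ ℂ{ξ,q,p}, where ⋆ is the Moyal normal-order star product. -/

import Mathlib

open Finset

/-- The Moyal normal-order star product on `ℂ[[t,q,p]]` in coefficient form:
`f i j l` is the coefficient of `q^i p^j t^l`. -/
noncomputable def star (f g : ℕ → ℕ → ℕ → ℂ) : ℕ → ℕ → ℕ → ℂ := fun i j l =>
  ∑ k ∈ range (l + 1), ∑ n ∈ range (l - k + 1), ∑ i1 ∈ range (i + 1), ∑ j1 ∈ range (j + 1),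
    (1 / (k.factorial : ℂ)) *
      (((j1 + k).factorial : ℂ) / (j1.factorial : ℂ)) * f i1 (j1 + k) n *
      ((((i - i1) + k).factorial : ℂ) / ((i - i1).factorial : ℂ)) * g ((i - i1) + k) (j - j1) (l - k - n)

/-- The formal Borel transform `β`: `t^k ↦ ξ^k/k!`. -/
noncomputable def borelT (f : ℕ → ℕ → ℕ → ℂ) : ℕ → ℕ → ℕ → ℂ :=
  fun i j k => f i j k / (k.factorial : ℂ)

/-- A power series is convergent iff its coefficients admit a geometric bound. -/
def IsConvergent (f : ℕ → ℕ → ℕ → ℂ) : Prop :=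
  ∃ C R : ℝ, 0 < C ∧ 0 < R ∧ ∀ i j k, ‖f i j k‖ ≤ C * R ^ (i + j + k)

lemma choose_le_two_pow' (n k : ℕ) : n.choose k ≤ 2 ^ n := by
  rcases le_or_gt k n with h | h
  · calc n.choose k ≤ ∑ i ∈ range (n + 1), n.choose i :=
        Finset.single_le_sum (fun _ _ => Nat.zero_le _) (mem_range.2 (Nat.lt_succ_of_le h))
      _ = 2 ^ n := Nat.sum_range_choose n
  · rw [Nat.choose_eq_zero_of_lt h]; positivity

lemma nat_key (l k j1 m n : ℕ) (hk : k ≤ l) (hn : n ≤ l - k) :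
    (j1 + k).factorial * (m + k).factorial * n.factorial * (l - k - n).factorial ≤
      2 ^ (j1 + k) * 2 ^ (m + k) *
        (k.factorial * j1.factorial * m.factorial * l.factorial) := by
  have h1 : (j1 + k).factorial ≤ 2 ^ (j1 + k) * (k.factorial * j1.factorial) := by
    have e := Nat.choose_mul_factorial_mul_factorial (Nat.le_add_left k j1)
    have e' : j1 + k - k = j1 := by omega
    rw [e'] at e
    calc (j1 + k).factorial = (j1 + k).choose k * k.factorial * j1.factorial := e.symm
      _ ≤ 2 ^ (j1 + k) * k.factorial * j1.factorial := by
          exact Nat.mul_le_mul_right _ (Nat.mul_le_mul_right _ (choose_le_two_pow' _ _))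
      _ = 2 ^ (j1 + k) * (k.factorial * j1.factorial) := by ring
  have h2 : (m + k).factorial ≤ 2 ^ (m + k) * (k.factorial * m.factorial) := by
    have e := Nat.choose_mul_factorial_mul_factorial (Nat.le_add_left k m)
    have e' : m + k - k = m := by omega
    rw [e'] at e
    calc (m + k).factorial = (m + k).choose k * k.factorial * m.factorial := e.symm
      _ ≤ 2 ^ (m + k) * k.factorial * m.factorial := by
          exact Nat.mul_le_mul_right _ (Nat.mul_le_mul_right _ (choose_le_two_pow' _ _))
      _ = 2 ^ (m + k) * (k.factorial * m.factorial) := by ring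
  have h3 : n.factorial * (l - k - n).factorial ≤ (l - k).factorial := by
    have e := Nat.choose_mul_factorial_mul_factorial hn
    have hp := Nat.choose_pos hn
    calc n.factorial * (l - k - n).factorial
        = 1 * (n.factorial * (l - k - n).factorial) := (one_mul _).symm
      _ ≤ (l - k).choose n * (n.factorial * (l - k - n).factorial) :=
          Nat.mul_le_mul_right _ hp
      _ = (l - k).factorial := by rw [← mul_assoc]; exact e
  have h4 : k.factorial * (l - k).factorial ≤ l.factorial := by
    have e := Nat.choose_mul_factorial_mul_factorial hk
    have hp := Nat.choose_pos hk
    calc k.factorial * (l - k).factorial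
        = 1 * (k.factorial * (l - k).factorial) := (one_mul _).symm
      _ ≤ l.choose k * (k.factorial * (l - k).factorial) := Nat.mul_le_mul_right _ hp
      _ = l.factorial := by rw [← mul_assoc]; exact e
  calc (j1 + k).factorial * (m + k).factorial * n.factorial * (l - k - n).factorial
      = (j1 + k).factorial * ((m + k).factorial * (n.factorial * (l - k - n).factorial)) := by
        ring
    _ ≤ (2 ^ (j1 + k) * (k.factorial * j1.factorial)) *
          ((2 ^ (m + k) * (k.factorial * m.factorial)) * (l - k).factorial) :=
        Nat.mul_le_mul h1 (Nat.mul_le_mul h2 h3)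
    _ = 2 ^ (j1 + k) * (2 ^ (m + k) * (j1.factorial * (m.factorial *
          (k.factorial * (k.factorial * (l - k).factorial))))) := by ring
    _ ≤ 2 ^ (j1 + k) * (2 ^ (m + k) * (j1.factorial * (m.factorial *
          (k.factorial * l.factorial)))) := by gcongr
    _ = 2 ^ (j1 + k) * 2 ^ (m + k) *
          (k.factorial * j1.factorial * m.factorial * l.factorial) := by ring

lemma norm_sum_le_card_mul {α : Type*} (s : Finset α) (h : α → ℂ) (B : ℝ) (c : ℕ)
    (hc : s.card ≤ c) (hB : 0 ≤ B) (hb : ∀ x ∈ s, ‖h x‖ ≤ B) :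
    ‖∑ x ∈ s, h x‖ ≤ c * B := by
  calc ‖∑ x ∈ s, h x‖ ≤ ∑ x ∈ s, B := norm_sum_le_of_le s hb
    _ = s.card * B := by rw [Finset.sum_const, nsmul_eq_mul]
    _ ≤ c * B := mul_le_mul_of_nonneg_right (by exact_mod_cast hc) hB

lemma term_bound (f g : ℕ → ℕ → ℕ → ℂ) (C1 R1 C2 R2 R0 : ℝ)
    (hC1 : 0 < C1) (hC2 : 0 < C2) (hR0 : 1 ≤ R0) (hR1 : R1 ≤ R0) (hR2 : R2 ≤ R0)
    (hR1p : 0 ≤ R1) (hR2p : 0 ≤ R2)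
    (hf : ∀ i j k, ‖borelT f i j k‖ ≤ C1 * R1 ^ (i + j + k))
    (hg : ∀ i j k, ‖borelT g i j k‖ ≤ C2 * R2 ^ (i + j + k))
    (i j l k n i1 j1 m : ℕ) (hk : k ≤ l) (hn : n ≤ l - k) (hi1 : i1 ≤ i) (hj1 : j1 ≤ j)
    (hm : m ≤ i) :
    ‖(1 / (k.factorial : ℂ)) * (((j1 + k).factorial : ℂ) / (j1.factorial : ℂ)) *
        f i1 (j1 + k) n * (((m + k).factorial : ℂ) / (m.factorial : ℂ)) *
        g (m + k) (j - j1) (l - k - n)‖ ≤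
      C1 * C2 * (4 * R0 ^ 2) ^ (i + j + l) * l.factorial := by
  have hf' : ∀ a b c : ℕ, ‖f a b c‖ ≤ C1 * R0 ^ (a + b + c) * c.factorial := by
    intro a b c
    have h := hf a b c
    rw [borelT] at h
    have hc : (0:ℝ) < c.factorial := by positivity
    have h2 : ‖f a b c‖ = ‖f a b c / (c.factorial : ℂ)‖ * c.factorial := by
      rw [norm_div, Complex.norm_natCast, div_mul_cancel₀ _ hc.ne']
    rw [h2]
    calc ‖f a b c / (c.factorial : ℂ)‖ * (c.factorial : ℝ)
        ≤ (C1 * R1 ^ (a + b + c)) * c.factorial :=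
          mul_le_mul_of_nonneg_right h (by positivity)
      _ ≤ C1 * R0 ^ (a + b + c) * c.factorial :=
          mul_le_mul_of_nonneg_right
            (mul_le_mul_of_nonneg_left (pow_le_pow_left₀ hR1p hR1 _) hC1.le) (by positivity)
  have hg' : ∀ a b c : ℕ, ‖g a b c‖ ≤ C2 * R0 ^ (a + b + c) * c.factorial := by
    intro a b c
    have h := hg a b c
    rw [borelT] at h
    have hc : (0:ℝ) < c.factorial := by positivity
    have h2 : ‖g a b c‖ = ‖g a b c / (c.factorial : ℂ)‖ * c.factorial := by
      rw [norm_div, Complex.norm_natCast, div_mul_cancel₀ _ hc.ne']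
    rw [h2]
    calc ‖g a b c / (c.factorial : ℂ)‖ * (c.factorial : ℝ)
        ≤ (C2 * R2 ^ (a + b + c)) * c.factorial :=
          mul_le_mul_of_nonneg_right h (by positivity)
      _ ≤ C2 * R0 ^ (a + b + c) * c.factorial :=
          mul_le_mul_of_nonneg_right
            (mul_le_mul_of_nonneg_left (pow_le_pow_left₀ hR2p hR2 _) hC2.le) (by positivity)
  have hR0p : (0:ℝ) < R0 := lt_of_lt_of_le one_pos hR0
  have hnorm : ‖(1 / (k.factorial : ℂ)) * (((j1 + k).factorial : ℂ) / (j1.factorial : ℂ)) *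
      f i1 (j1 + k) n * (((m + k).factorial : ℂ) / (m.factorial : ℂ)) *
      g (m + k) (j - j1) (l - k - n)‖ =
      (1 / (k.factorial : ℝ)) * (((j1 + k).factorial : ℝ) / (j1.factorial : ℝ)) *
        ‖f i1 (j1 + k) n‖ * (((m + k).factorial : ℝ) / (m.factorial : ℝ)) *
        ‖g (m + k) (j - j1) (l - k - n)‖ := by
    simp [norm_mul, norm_div, Complex.norm_natCast]
  rw [hnorm]
  have key : ((j1 + k).factorial * (m + k).factorial * (n.factorial * (l - k - n).factorial)
      : ℝ) / (k.factorial * (j1.factorial * m.factorial)) ≤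
      2 ^ (j1 + k) * 2 ^ (m + k) * l.factorial := by
    rw [div_le_iff₀ (by positivity)]
    have := nat_key l k j1 m n hk hn
    calc ((j1 + k).factorial * (m + k).factorial * (n.factorial * (l - k - n).factorial) : ℝ)
        = ((j1 + k).factorial * (m + k).factorial * n.factorial * (l - k - n).factorial
          : ℕ) := by push_cast; ring
      _ ≤ ((2 ^ (j1 + k) * 2 ^ (m + k) *
            (k.factorial * j1.factorial * m.factorial * l.factorial) : ℕ) : ℝ) := by
          exact_mod_cast this
      _ = 2 ^ (j1 + k) * 2 ^ (m + k) * l.factorial *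
            (k.factorial * (j1.factorial * m.factorial)) := by push_cast; ring
  calc (1 / (k.factorial : ℝ)) * (((j1 + k).factorial : ℝ) / (j1.factorial : ℝ)) *
        ‖f i1 (j1 + k) n‖ * (((m + k).factorial : ℝ) / (m.factorial : ℝ)) *
        ‖g (m + k) (j - j1) (l - k - n)‖
      ≤ (1 / (k.factorial : ℝ)) * (((j1 + k).factorial : ℝ) / (j1.factorial : ℝ)) *
        (C1 * R0 ^ (i1 + (j1 + k) + n) * n.factorial) *
        (((m + k).factorial : ℝ) / (m.factorial : ℝ)) *
        (C2 * R0 ^ ((m + k) + (j - j1) + (l - k - n)) * (l - k - n).factorial) := by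
        gcongr
        · exact hf' _ _ _
        · exact hg' _ _ _
    _ = C1 * C2 * R0 ^ ((i1 + (j1 + k) + n) + ((m + k) + (j - j1) + (l - k - n))) *
        (((j1 + k).factorial * (m + k).factorial * (n.factorial * (l - k - n).factorial)
          : ℝ) / (k.factorial * (j1.factorial * m.factorial))) := by
        field_simp; ring
    _ ≤ C1 * C2 * R0 ^ (2 * (i + j + l)) *
        (2 ^ (j1 + k) * 2 ^ (m + k) * l.factorial) := by
        apply mul_le_mul _ key (by positivity) (by positivity)
        exact mul_le_mul_of_nonneg_left (pow_le_pow_right₀ hR0 (by omega)) (by positivity)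
    _ ≤ C1 * C2 * R0 ^ (2 * (i + j + l)) *
        (2 ^ (2 * (i + j + l)) * l.factorial) := by
        apply mul_le_mul_of_nonneg_left _ (by positivity)
        have h22 : (2:ℝ) ^ (j1 + k) * 2 ^ (m + k) = 2 ^ ((j1 + k) + (m + k)) :=
          (pow_add 2 _ _).symm
        rw [h22]
        exact mul_le_mul_of_nonneg_right (pow_le_pow_right₀ one_le_two (by omega))
          (by positivity)
    _ = C1 * C2 * (4 * R0 ^ 2) ^ (i + j + l) * l.factorial := by
        rw [show (4:ℝ) = 2 ^ 2 by norm_num, mul_pow, ← pow_mul, ← pow_mul]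
        ring

/-- Gevrey series form a `⋆`-subalgebra: if `β(f)` and `β(g)` are
convergent, then so is `β(f ⋆ g)`. -/
theorem gevrey_star_closed (f g : ℕ → ℕ → ℕ → ℂ)
    (hf : IsConvergent (borelT f)) (hg : IsConvergent (borelT g)) :
    IsConvergent (borelT (star f g)) := by
  obtain ⟨C1, R1, hC1, hR1, hf⟩ := hf
  obtain ⟨C2, R2, hC2, hR2, hg⟩ := hg
  set R0 : ℝ := max R1 (max R2 1) with hR0def
  have hR0 : 1 ≤ R0 := le_max_of_le_right (le_max_right _ _)
  have hR0p : (0:ℝ) < R0 := lt_of_lt_of_le one_pos hR0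
  refine ⟨C1 * C2, 16 * R0 ^ 2, by positivity, by positivity, ?_⟩
  intro i j l
  have hfac : (0:ℝ) < l.factorial := by positivity
  rw [borelT, norm_div, Complex.norm_natCast, div_le_iff₀ hfac]
  set D : ℝ := C1 * C2 * (4 * R0 ^ 2) ^ (i + j + l) * l.factorial with hD
  have hDpos : 0 ≤ D := by positivity
  have hmain : ‖star f g i j l‖ ≤
      ((l + 1 : ℕ) : ℝ) * (((l + 1 : ℕ) : ℝ) * (((i + 1 : ℕ) : ℝ) * (((j + 1 : ℕ) : ℝ) * D))) := by
    unfold _root_.star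
    apply norm_sum_le_card_mul _ _ _ (l + 1) (by simp) (by positivity)
    intro k hk
    rw [mem_range] at hk
    apply norm_sum_le_card_mul _ _ _ (l + 1) (by rw [card_range]; omega) (by positivity)
    intro n hn
    rw [mem_range] at hn
    apply norm_sum_le_card_mul _ _ _ (i + 1) (by simp) (by positivity)
    intro i1 hi1
    rw [mem_range] at hi1
    apply norm_sum_le_card_mul _ _ _ (j + 1) (by simp) hDpos
    intro j1 hj1
    rw [mem_range] at hj1
    exact term_bound f g C1 R1 C2 R2 R0 hC1 hC2 hR0 (le_max_left _ _)
      (le_max_of_le_right (le_max_left _ _)) hR1.le hR2.le hf hg i j l k n i1 j1 (i - i1)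
      (by omega) (by omega) (by omega) (by omega) (by omega)
  have hpow : ∀ a : ℕ, ((a + 1 : ℕ) : ℝ) ≤ 2 ^ a := by
    intro a
    exact_mod_cast (Nat.lt_two_pow_self (n := a))
  push_cast at hmain
  calc ‖star f g i j l‖ ≤ ((l:ℝ) + 1) * (((l:ℝ) + 1) * (((i:ℝ) + 1) * (((j:ℝ) + 1) * D))) := hmain
    _ ≤ 2 ^ l * (2 ^ l * (2 ^ i * (2 ^ j * D))) := by
        have h1 := hpow l
        have h2 := hpow i
        have h3 := hpow j
        push_cast at h1 h2 h3
        gcongr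
    _ = 2 ^ (l + (l + (i + j))) * D := by rw [pow_add, pow_add, pow_add]; ring
    _ ≤ 2 ^ (2 * (i + j + l)) * D :=
        mul_le_mul_of_nonneg_right (pow_le_pow_right₀ one_le_two (by omega)) hDpos
    _ = C1 * C2 * (16 * R0 ^ 2) ^ (i + j + l) * l.factorial := by
        have h16 : ((16:ℝ) * R0 ^ 2) ^ (i + j + l) =
            2 ^ (2 * (i + j + l)) * (4 * R0 ^ 2) ^ (i + j + l) := by
          rw [show (16:ℝ) * R0 ^ 2 = 2 ^ 2 * (4 * R0 ^ 2) by ring, mul_pow, ← pow_mul]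
        rw [hD, h16]
        ring
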